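/- With notation as in the previous context, define B := L − LXL + LXLXL − ... and A := U + UXU + UXUXU + ..., where L is the strictly lower-triangular all-ones matrix. Then the entries satisfy b_{ij} = (a_{1j} · a_{im} − a_{1m} · a_{ij}) · a_{1m}^{-1} for all i, j ∈ {1,...,m}, where a_{1m} is invertible in the ring of formal power series. -/

import Mathlib

/-- The upper-triangular all-ones `s × s` matrix `U = Σ_{i ≤ j} E_{ij}` over the ring of
formal power series in variables `x_{ij}`. -/
noncomputable def Umat (s : ℕ) : Matrix (Fin s) (Fin s) (MvPowerSeries (Fin s × Fin s) ℤ) :=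
  Matrix.of fun i j => if i ≤ j then 1 else 0

/-- The strictly lower-triangular all-ones matrix `L = Σ_{i > j} E_{ij}`. -/
noncomputable def Lmat (s : ℕ) : Matrix (Fin s) (Fin s) (MvPowerSeries (Fin s × Fin s) ℤ) :=
  Matrix.of fun i j => if j < i then 1 else 0

/-- The matrix `X = (x_{ij})` of formal power series variables. -/
noncomputable def Xmat (s : ℕ) : Matrix (Fin s) (Fin s) (MvPowerSeries (Fin s × Fin s) ℤ) :=
  Matrix.of fun i j => MvPowerSeries.X (i, j)

/-- `A := U + UXU + UXUXU + ⋯ = U (1 - XU)⁻¹`. -/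
noncomputable def Amat (s : ℕ) : Matrix (Fin s) (Fin s) (MvPowerSeries (Fin s × Fin s) ℤ) :=
  Umat s * (1 - Xmat s * Umat s)⁻¹

/-- `B := L - LXL + LXLXL - ⋯ = L (1 + XL)⁻¹`. -/
noncomputable def Bmat (s : ℕ) : Matrix (Fin s) (Fin s) (MvPowerSeries (Fin s × Fin s) ℤ) :=
  Lmat s * (1 + Xmat s * Lmat s)⁻¹

section Aux

variable (m : ℕ)

local notation "R" => MvPowerSeries (Fin (m+1) × Fin (m+1)) ℤ

noncomputable abbrev φc : R →+* ℤ := (MvPowerSeries.constantCoeff : R →+* ℤ)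

lemma Xmat_map_zero : (Xmat (m+1)).map (φc m) = 0 := by
  ext i j
  simp [Xmat, MvPowerSeries.constantCoeff_X, Matrix.zero_apply]

lemma LU_add (i j : Fin (m+1)) : Lmat (m+1) i j + Umat (m+1) i j = 1 := by
  simp only [Lmat, Umat, Matrix.of_apply]
  rcases lt_or_ge j i with h | h
  · rw [if_pos h, if_neg (by omega)]; ring
  · rw [if_neg (by omega), if_pos h]; ring

lemma detU_isUnit : IsUnit (1 - Xmat (m+1) * Umat (m+1)).det := by
  rw [MvPowerSeries.isUnit_iff_constantCoeff]
  have : (φc m) (1 - Xmat (m+1) * Umat (m+1)).det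
      = ((1 - Xmat (m+1) * Umat (m+1)).map (φc m)).det := RingHom.map_det _ _
  rw [this]
  have h1 : (1 - Xmat (m+1) * Umat (m+1)).map (φc m) = 1 := by
    have := map_sub ((φc m).mapMatrix) (1 : Matrix (Fin (m+1)) (Fin (m+1)) R)
      (Xmat (m+1) * Umat (m+1))
    simp only [RingHom.mapMatrix_apply, map_one, map_mul] at this
    rw [this, Xmat_map_zero]
    simp
  rw [h1, Matrix.det_one]
  exact isUnit_one

lemma detL_isUnit : IsUnit (1 + Xmat (m+1) * Lmat (m+1)).det := by
  rw [MvPowerSeries.isUnit_iff_constantCoeff]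
  have : (φc m) (1 + Xmat (m+1) * Lmat (m+1)).det
      = ((1 + Xmat (m+1) * Lmat (m+1)).map (φc m)).det := RingHom.map_det _ _
  rw [this]
  have h1 : (1 + Xmat (m+1) * Lmat (m+1)).map (φc m) = 1 := by
    have := map_add ((φc m).mapMatrix) (1 : Matrix (Fin (m+1)) (Fin (m+1)) R)
      (Xmat (m+1) * Lmat (m+1))
    simp only [RingHom.mapMatrix_apply, map_one, map_mul] at this
    rw [this, Xmat_map_zero]
    simp
  rw [h1, Matrix.det_one]
  exact isUnit_one

lemma hAU : Amat (m+1) * (1 - Xmat (m+1) * Umat (m+1)) = Umat (m+1) := by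
  unfold Amat
  exact Matrix.nonsing_inv_mul_cancel_right _ _ (detU_isUnit m)

lemma hA' : Amat (m+1) = Umat (m+1) + (Amat (m+1) * Xmat (m+1)) * Umat (m+1) := by
  have h := hAU m
  rw [mul_sub, mul_one, ← mul_assoc, sub_eq_iff_eq_add] at h
  exact h

lemma hBL : Bmat (m+1) * (1 + Xmat (m+1) * Lmat (m+1)) = Lmat (m+1) := by
  unfold Bmat
  exact Matrix.nonsing_inv_mul_cancel_right _ _ (detL_isUnit m)

lemma U_last (k : Fin (m+1)) : Umat (m+1) k (Fin.last m) = 1 := by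
  simp [Umat, Fin.le_last]

lemma U_zero (j : Fin (m+1)) : Umat (m+1) 0 j = 1 := by
  simp [Umat, Fin.zero_le]

lemma A_last (i : Fin (m+1)) :
    Amat (m+1) i (Fin.last m) = 1 + ∑ k, (Amat (m+1) * Xmat (m+1)) i k := by
  have h := congrFun (congrFun (hA' m) i) (Fin.last m)
  rw [Matrix.add_apply, Matrix.mul_apply] at h
  simp only [U_last, mul_one] at h
  exact h

lemma AXU_entry (i j : Fin (m+1)) :
    ((Amat (m+1) * Xmat (m+1)) * Umat (m+1)) i j = Amat (m+1) i j - Umat (m+1) i j := by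
  have h := congrFun (congrFun (hA' m) i) j
  rw [Matrix.add_apply] at h
  rw [h]; ring

lemma AM_entry (i j : Fin (m+1)) :
    (Amat (m+1) * (1 + Xmat (m+1) * Lmat (m+1))) i j
      = Umat (m+1) i j + (Amat (m+1) i (Fin.last m) - 1) := by
  have hsum : ((Amat (m+1) * Xmat (m+1)) * Lmat (m+1)) i j
      + ((Amat (m+1) * Xmat (m+1)) * Umat (m+1)) i j
      = ∑ k, (Amat (m+1) * Xmat (m+1)) i k := by
    rw [Matrix.mul_apply, Matrix.mul_apply, ← Finset.sum_add_distrib]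
    refine Finset.sum_congr rfl fun k _ => ?_
    rw [← mul_add, LU_add, mul_one]
  have hXL : ((Amat (m+1) * Xmat (m+1)) * Lmat (m+1)) i j
      = (Amat (m+1) i (Fin.last m) - 1) - (Amat (m+1) i j - Umat (m+1) i j) := by
    rw [eq_sub_iff_add_eq, ← AXU_entry m i j, hsum, A_last]; ring
  rw [mul_add, mul_one, Matrix.add_apply, ← mul_assoc, hXL]
  ring

lemma a_isUnit : IsUnit (Amat (m+1) 0 (Fin.last m)) := by
  rw [MvPowerSeries.isUnit_iff_constantCoeff]
  have h := congrArg ((φc m).mapMatrix) (hAU m)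
  simp only [map_mul, map_sub, map_one, RingHom.mapMatrix_apply] at h
  rw [Xmat_map_zero m] at h
  simp only [zero_mul, sub_zero, mul_one] at h
  have h2 := congrFun (congrFun h 0) (Fin.last m)
  simp only [Matrix.map_apply, U_zero, map_one] at h2
  exact h2 ▸ isUnit_one

end Aux

/-- With `A = U + UXU + ⋯` and `B = L - LXL + ⋯` (matrices of size `m+1`, rows/columns
indexed `1, …, m` by `0, …, Fin.last m`), the entry `a_{1m}` is invertible in the ring of
formal power series and `b_{ij} = (a_{1j} a_{im} - a_{1m} a_{ij}) a_{1m}⁻¹` for all `i, j`. -/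
theorem b_entries_from_a_entries (m : ℕ) :
    IsUnit (Amat (m + 1) 0 (Fin.last m)) ∧
    ∀ i j : Fin (m + 1),
      Bmat (m + 1) i j =
        (Amat (m + 1) 0 j * Amat (m + 1) i (Fin.last m)
          - Amat (m + 1) 0 (Fin.last m) * Amat (m + 1) i j) *
        Ring.inverse (Amat (m + 1) 0 (Fin.last m)) := by
  refine ⟨a_isUnit m, ?_⟩
  set C : Matrix (Fin (m+1)) (Fin (m+1)) (MvPowerSeries (Fin (m+1) × Fin (m+1)) ℤ) :=
    Matrix.of fun i j => (Amat (m+1) 0 j * Amat (m+1) i (Fin.last m)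
      - Amat (m+1) 0 (Fin.last m) * Amat (m+1) i j)
      * Ring.inverse (Amat (m+1) 0 (Fin.last m)) with hC
  have hCM : C * (1 + Xmat (m+1) * Lmat (m+1)) = Lmat (m+1) := by
    refine Matrix.ext fun i j => ?_
    rw [Matrix.mul_apply]
    have step : ∑ k, C i k * (1 + Xmat (m+1) * Lmat (m+1)) k j
        = (Amat (m+1) i (Fin.last m) * ((Amat (m+1) * (1 + Xmat (m+1) * Lmat (m+1))) 0 j)
          - Amat (m+1) 0 (Fin.last m) * ((Amat (m+1) * (1 + Xmat (m+1) * Lmat (m+1))) i j))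
          * Ring.inverse (Amat (m+1) 0 (Fin.last m)) := by
      rw [Matrix.mul_apply, Matrix.mul_apply, Finset.mul_sum, Finset.mul_sum,
        ← Finset.sum_sub_distrib, Finset.sum_mul]
      refine Finset.sum_congr rfl fun k _ => ?_
      simp only [hC, Matrix.of_apply]
      ring
    rw [step, AM_entry m 0 j, AM_entry m i j, U_zero]
    have key : (Amat (m+1) i (Fin.last m) * (1 + (Amat (m+1) 0 (Fin.last m) - 1))
        - Amat (m+1) 0 (Fin.last m) * (Umat (m+1) i j + (Amat (m+1) i (Fin.last m) - 1)))
        * Ring.inverse (Amat (m+1) 0 (Fin.last m))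
        = (1 - Umat (m+1) i j)
          * (Amat (m+1) 0 (Fin.last m) * Ring.inverse (Amat (m+1) 0 (Fin.last m))) := by
      ring
    rw [key, Ring.mul_inverse_cancel _ (a_isUnit m), mul_one]
    linear_combination -LU_add m i j
  have hBC : Bmat (m+1) = C := by
    have h1 : Bmat (m+1) * (1 + Xmat (m+1) * Lmat (m+1))
        * (1 + Xmat (m+1) * Lmat (m+1))⁻¹ = Bmat (m+1) :=
      Matrix.mul_nonsing_inv_cancel_right _ _ (detL_isUnit m)
    have h2 : C * (1 + Xmat (m+1) * Lmat (m+1)) * (1 + Xmat (m+1) * Lmat (m+1))⁻¹ = C :=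
      Matrix.mul_nonsing_inv_cancel_right _ _ (detL_isUnit m)
    rw [hBL m] at h1
    rw [hCM] at h2
    exact h1.symm.trans h2
  intro i j
  rw [hBC]
  simp [hC]
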